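/- If p is a strongly summable ultrafilter on ℕ, then the pushforward u of p under the map bmax (sending n > 0 to the maximum of its binary support, and 0 to 0) is a P-point: u is nonprincipal, and for every sequence (A_n)_{n∈ℕ} of elements of u there exists B ∈ u such that B \ A_n is finite for every n. -/

import Mathlib

/-- `FS(x)`: the set of all finite sums `∑_{i∈s} x i` over nonempty finite `s ⊆ ℕ`. -/
def FS (x : ℕ → ℕ) : Set ℕ := {n | ∃ s : Finset ℕ, s.Nonempty ∧ ∑ i ∈ s, x i = n}

/-- `p` is strongly summable. -/
def StronglySummable (p : Ultrafilter ℕ) : Prop :=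
  ∀ A ∈ p, ∃ x : ℕ → ℕ, (∀ n, 0 < x n) ∧ FS x ⊆ A ∧ FS x ∈ p

/-- The binary support of `n`. -/
def bsupp (n : ℕ) : Set ℕ := {i | (n / 2 ^ i) % 2 = 1}

/-- `bmax n`: the maximum of the binary support of `n` (and `0` for `n = 0`). -/
noncomputable def bmax (n : ℕ) : ℕ := sSup (bsupp n)

namespace PPointAux

lemma bmax_eq_log {m : ℕ} (hm : m ≠ 0) : bmax m = Nat.log 2 m := by
  have h1 : 2 ^ Nat.log 2 m ≤ m := Nat.pow_log_le_self 2 hm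
  have h2 : m < 2 ^ (Nat.log 2 m + 1) := Nat.lt_pow_succ_log_self (by norm_num) m
  have hgt : IsGreatest (bsupp m) (Nat.log 2 m) := by
    constructor
    · show m / 2 ^ Nat.log 2 m % 2 = 1
      have h3 : m / 2 ^ Nat.log 2 m = 1 := by
        apply Nat.div_eq_of_lt_le (by simpa using h1)
        simpa [pow_succ, mul_comm] using h2
      simp [h3]
    · intro i hi
      by_contra hlt
      push_neg at hlt
      have h0 : m / 2 ^ i = 0 :=
        Nat.div_eq_of_lt (lt_of_lt_of_le h2 (Nat.pow_le_pow_right (by norm_num) hlt))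
      have : (m / 2 ^ i) % 2 = 1 := hi
      simp [h0] at this
  exact hgt.csSup_eq

lemma pow_bmax_le {m : ℕ} (hm : m ≠ 0) : 2 ^ bmax m ≤ m := by
  rw [bmax_eq_log hm]; exact Nat.pow_log_le_self 2 hm

lemma lt_pow_bmax {m : ℕ} (hm : m ≠ 0) : m < 2 ^ (bmax m + 1) := by
  rw [bmax_eq_log hm]; exact Nat.lt_pow_succ_log_self (by norm_num) m

lemma bmax_le_of_lt {m k : ℕ} (hm : m ≠ 0) (h : m < 2 ^ (k + 1)) : bmax m ≤ k := by
  rw [bmax_eq_log hm]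
  have := Nat.log_lt_of_lt_pow hm h
  omega

lemma le_bmax_of_pow_le {m k : ℕ} (h : 2 ^ k ≤ m) : k ≤ bmax m := by
  have hm : m ≠ 0 := by
    have : 0 < 2 ^ k := by positivity
    omega
  rw [bmax_eq_log hm]
  exact (Nat.le_log_iff_pow_le (b := 2) (by norm_num) hm).2 h

lemma bmax_mono {a b : ℕ} (ha : a ≠ 0) (hab : a ≤ b) : bmax a ≤ bmax b :=
  le_bmax_of_pow_le (le_trans (pow_bmax_le ha) hab)

/-! ### 2-adic valuation -/

def v2 (m : ℕ) : ℕ := m.factorization 2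

def oP (m : ℕ) : ℕ := m / 2 ^ v2 m

noncomputable def tp (m : ℕ) : ℕ := m / 2 ^ (bmax m - 1)

lemma pow_v2_dvd (m : ℕ) : 2 ^ v2 m ∣ m := Nat.ordProj_dvd m 2

lemma v2_dvd_iff {m k : ℕ} (hm : m ≠ 0) : 2 ^ k ∣ m ↔ k ≤ v2 m :=
  Nat.Prime.pow_dvd_iff_le_factorization Nat.prime_two hm

lemma oP_odd {m : ℕ} (hm : m ≠ 0) : oP m % 2 = 1 := by
  have h := Nat.not_dvd_ordCompl Nat.prime_two hm
  rcases Nat.mod_two_eq_zero_or_one (oP m) with h0 | h1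
  · exact absurd (Nat.dvd_of_mod_eq_zero h0) h
  · exact h1

lemma pow_v2_mul_oP (m : ℕ) : 2 ^ v2 m * oP m = m :=
  Nat.ordProj_mul_ordCompl_eq_self m 2

lemma v2_pow_mul {v w : ℕ} (hw : w % 2 = 1) : v2 (2 ^ v * w) = v := by
  have hw0 : w ≠ 0 := by omega
  unfold v2
  rw [Nat.factorization_mul (by positivity) hw0]
  rw [Nat.Prime.factorization_pow Nat.prime_two]
  have h2 : w.factorization 2 = 0 :=
    Nat.factorization_eq_zero_of_not_dvd (by omega)
  simp [h2]

lemma oP_pow_mul {v w : ℕ} (hw : w % 2 = 1) : oP (2 ^ v * w) = w := by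
  rw [oP, v2_pow_mul hw]
  exact Nat.mul_div_cancel_left w (by positivity)

lemma v2_add_left {a b : ℕ} (ha : a ≠ 0) (hb : b ≠ 0) (hab : v2 a < v2 b) :
    v2 (a + b) = v2 a := by
  have hdb : 2 ^ v2 a ∣ b := (v2_dvd_iff hb).2 (le_of_lt hab)
  have h1 : 2 ^ v2 a ∣ a + b := Dvd.dvd.add (pow_v2_dvd a) hdb
  have h2 : ¬ 2 ^ (v2 a + 1) ∣ a + b := by
    intro hdvd
    have hb2 : 2 ^ (v2 a + 1) ∣ b := (v2_dvd_iff hb).2 (by omega)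
    have hda : 2 ^ (v2 a + 1) ∣ a := by
      have := Nat.dvd_sub hdvd hb2
      simpa using this
    have := (v2_dvd_iff ha).1 hda
    omega
  have hab0 : a + b ≠ 0 := by omega
  have hle : v2 a ≤ v2 (a + b) := (v2_dvd_iff hab0).1 h1
  have hlt : ¬ (v2 a + 1 ≤ v2 (a + b)) := fun hc => h2 ((v2_dvd_iff hab0).2 hc)
  omega

lemma v2_tie {v α β : ℕ} (hα : α % 2 = 1) (hmod : α % 4 = β % 4) :
    v2 (2 ^ v * α + 2 ^ v * β) = v + 1 := by
  have hu : α + β = 2 * ((α + β) / 2) ∧ ((α + β) / 2) % 2 = 1 := by omega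
  have heq : 2 ^ v * α + 2 ^ v * β = 2 ^ (v + 1) * ((α + β) / 2) := by
    rw [← Nat.mul_add, pow_succ]
    calc 2 ^ v * (α + β) = 2 ^ v * (2 * ((α + β) / 2)) := by rw [← hu.1]
      _ = 2 ^ v * 2 * ((α + β) / 2) := by ring
  rw [heq]
  exact v2_pow_mul hu.2


/-! ### the top-block function `tp` -/

lemma tp_two_or_three {m : ℕ} (hm : 2 ≤ m) : tp m = 2 ∨ tp m = 3 := by
  have hm0 : m ≠ 0 := by omega
  obtain ⟨M, hM⟩ : ∃ M, bmax m = M + 1 := by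
    have : 1 ≤ bmax m := le_bmax_of_pow_le (by simpa using hm)
    exact ⟨bmax m - 1, by omega⟩
  have h1 : 2 ^ (M + 1) ≤ m := by rw [← hM]; exact pow_bmax_le hm0
  have h2 : m < 2 ^ (M + 2) := by
    have := lt_pow_bmax hm0; rwa [hM] at this
  have hq1 : 2 ≤ m / 2 ^ M := by
    apply Nat.le_div_iff_mul_le (by positivity) |>.2
    calc 2 * 2 ^ M = 2 ^ (M + 1) := by ring
      _ ≤ m := h1
  have hq2 : m / 2 ^ M < 4 := by
    apply Nat.div_lt_iff_lt_mul (by positivity) |>.2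
    calc m < 2 ^ (M + 2) := h2
      _ = 4 * 2 ^ M := by ring
  have htp : tp m = m / 2 ^ M := by rw [tp, hM]; norm_num
  omega

/-- The carry lemma: if `l` is small relative to the top of `h` and `l + h` has the
same top block as `h`, then adding `l` does not push the top bit up. -/
lemma carry {h l : ℕ} (hh : 2 ≤ h) (hl : l < 2 ^ (bmax h - 1)) (ht : tp (l + h) = tp h) :
    bmax (l + h) = bmax h := by
  have hh0 : h ≠ 0 := by omega
  obtain ⟨M, hM⟩ : ∃ M, bmax h = M + 1 := by
    have : 1 ≤ bmax h := le_bmax_of_pow_le (by simpa using hh)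
    exact ⟨bmax h - 1, by omega⟩
  have h1 : 2 ^ (M + 1) ≤ h := by rw [← hM]; exact pow_bmax_le hh0
  have h2 : h < 2 ^ (M + 2) := by have := lt_pow_bmax hh0; rwa [hM] at this
  have hl' : l < 2 ^ M := by rw [hM] at hl; simpa using hl
  have hm0 : l + h ≠ 0 := by omega
  have hge : M + 1 ≤ bmax (l + h) :=
    le_bmax_of_pow_le (le_trans h1 (Nat.le_add_left h l))
  have hpow : (2:ℕ) ^ (M + 2) = 4 * 2 ^ M := by ring
  have hpow1 : (2:ℕ) ^ (M + 1) = 2 * 2 ^ M := by ring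
  have hpow3 : (2:ℕ) ^ (M + 3) = 8 * 2 ^ M := by ring
  have hle : bmax (l + h) ≤ M + 2 := by
    apply bmax_le_of_lt hm0
    have hMpos : (0:ℕ) < 2 ^ M := by positivity
    calc l + h < 2 ^ M + 2 ^ (M + 2) := by omega
      _ ≤ 2 ^ (M + 2 + 1) := by rw [hpow]; rw [hpow3]; omega
  rcases Nat.eq_or_lt_of_le hge with heq | hlt
  · omega
  · exfalso
    have hb2 : bmax (l + h) = M + 2 := by omega
    have hub : 2 ^ (M + 2) ≤ l + h := by rw [← hb2]; exact pow_bmax_le hm0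
    have htlh : tp (l + h) = (l + h) / 2 ^ (M + 1) := by rw [tp, hb2]; norm_num
    have hth : tp h = h / 2 ^ M := by rw [tp, hM]; norm_num
    have hdiv : (l + h) / 2 ^ (M + 1) = 2 := by
      apply Nat.div_eq_of_lt_le
      · show 2 * 2 ^ (M + 1) ≤ l + h
        rw [hpow1] at *; rw [hpow] at hub; omega
      · have hMpos : (0:ℕ) < 2 ^ M := by positivity
        show l + h < (2 + 1) * 2 ^ (M + 1)
        have : l + h < 2 ^ M + 4 * 2 ^ M := by omega
        rw [hpow1]; omega
    have hhd : h / 2 ^ M = 2 := by rw [← hth, ← ht, htlh, hdiv]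
    have hhlt : h < 3 * 2 ^ M := by
      have := (Nat.div_lt_iff_lt_mul (show (0:ℕ) < 2 ^ M by positivity)).1
        (show h / 2 ^ M < 3 by omega)
      omega
    have : l + h < 4 * 2 ^ M := by omega
    omega

/-! ### FS basics -/

lemma single_mem_FS (x : ℕ → ℕ) (i : ℕ) : x i ∈ FS x :=
  ⟨{i}, Finset.singleton_nonempty i, by simp⟩

lemma pair_mem_FS (x : ℕ → ℕ) {i j : ℕ} (hij : i ≠ j) : x i + x j ∈ FS x :=
  ⟨{i, j}, Finset.insert_nonempty _ _, Finset.sum_pair hij⟩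

lemma triple_mem_FS (x : ℕ → ℕ) {i j k : ℕ} (hij : i ≠ j) (hik : i ≠ k) (hjk : j ≠ k) :
    x i + x j + x k ∈ FS x := by
  refine ⟨{i, j, k}, Finset.insert_nonempty _ _, ?_⟩
  rw [show ({i, j, k} : Finset ℕ) = insert i {j, k} from rfl]
  rw [Finset.sum_insert (by simp [hij, hik]), Finset.sum_pair hjk]
  ring

lemma FS_pos {x : ℕ → ℕ} (hx : ∀ i, 0 < x i) {m : ℕ} (hm : m ∈ FS x) : 0 < m := by
  obtain ⟨s, hs, rfl⟩ := hm
  exact Finset.sum_pos (fun i _ => hx i) hs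

lemma FS_infinite {x : ℕ → ℕ} (hx : ∀ i, 0 < x i) : (FS x).Infinite := by
  apply Set.infinite_of_injective_forall_mem
    (f := fun k => ∑ i ∈ Finset.range (k + 1), x i)
  case hi =>
    have hsm : StrictMono (fun k => ∑ i ∈ Finset.range (k + 1), x i) := by
      apply strictMono_nat_of_lt_succ
      intro k
      simp only [Finset.sum_range_succ (n := k + 1)]
      have := hx (k + 1)
      omega
    exact hsm.injective
  case hf =>
    intro k
    exact ⟨Finset.range (k + 1), ⟨0, by simp⟩, rfl⟩

lemma v2_sum_ge {x : ℕ → ℕ} (hx : ∀ i, 0 < x i) {s : Finset ℕ} (hs : s.Nonempty) {n : ℕ}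
    (h : ∀ j ∈ s, n ≤ v2 (x j)) : n ≤ v2 (∑ j ∈ s, x j) := by
  have hsum0 : (∑ j ∈ s, x j) ≠ 0 := by
    have := Finset.sum_pos (fun i _ => hx i) hs; omega
  apply (v2_dvd_iff hsum0).1
  apply Finset.dvd_sum
  intro j hj
  exact (v2_dvd_iff (by have := hx j; omega)).2 (h j hj)

/-! ### ultrafilter basics -/

lemma p_nofin {p : Ultrafilter ℕ} (hp : StronglySummable p) {S : Set ℕ} (hfin : S.Finite) :
    S ∉ p := by
  intro hS
  obtain ⟨x, hxpos, hsub, -⟩ := hp S hS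
  exact (FS_infinite hxpos).mono hsub hfin

lemma u_nofin {p : Ultrafilter ℕ} (hp : StronglySummable p) {S : Set ℕ} (hfin : S.Finite) :
    S ∉ p.map bmax := by
  intro hS
  rw [Ultrafilter.mem_map] at hS
  obtain ⟨K, hK⟩ : ∃ K, ∀ b ∈ S, b ≤ K := by
    obtain ⟨K, hK⟩ := hfin.bddAbove
    exact ⟨K, fun b hb => hK hb⟩
  have hsub : bmax ⁻¹' S ⊆ Set.Iio (2 ^ (K + 1)) := by
    intro m hm
    rcases Nat.eq_zero_or_pos m with rfl | hm0
    · have : (0:ℕ) < 2 ^ (K + 1) := by positivity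
      exact this
    · have h1 : m < 2 ^ (bmax m + 1) := lt_pow_bmax (by omega)
      have h2 : bmax m ≤ K := hK _ hm
      have : (2:ℕ) ^ (bmax m + 1) ≤ 2 ^ (K + 1) :=
        Nat.pow_le_pow_right (by norm_num) (by omega)
      exact lt_of_lt_of_le h1 this
  exact p_nofin hp ((Set.finite_Iio _).subset hsub) hS

lemma pos_mem {p : Ultrafilter ℕ} (hp : StronglySummable p) : {m : ℕ | 0 < m} ∈ p := by
  have : {m : ℕ | 0 < m} = ({0} : Set ℕ)ᶜ := by ext m; simp [Nat.pos_iff_ne_zero]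
  rw [this]
  exact Ultrafilter.compl_mem_iff_notMem.2 (p_nofin hp (Set.finite_singleton 0))

lemma two_le_mem {p : Ultrafilter ℕ} (hp : StronglySummable p) : {m : ℕ | 2 ≤ m} ∈ p := by
  have : {m : ℕ | 2 ≤ m} = ({m : ℕ | m < 2})ᶜ := by ext m; simp; omega
  rw [this]
  apply Ultrafilter.compl_mem_iff_notMem.2
  apply p_nofin hp
  exact (Set.finite_Iio 2).subset (by intro m hm; exact hm)

lemma exists_O {p : Ultrafilter ℕ} (hp : StronglySummable p) :
    ∃ ω, ω % 2 = 1 ∧ {m : ℕ | oP m % 4 = ω} ∈ p := by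
  have hsub : {m : ℕ | 0 < m} ⊆ {m : ℕ | oP m % 4 = 1} ∪ {m : ℕ | oP m % 4 = 3} := by
    intro m hm
    have hm' : m ≠ 0 := by have : 0 < m := hm; omega
    have := oP_odd hm'
    simp only [Set.mem_union, Set.mem_setOf_eq]
    omega
  have hu : {m : ℕ | oP m % 4 = 1} ∪ {m : ℕ | oP m % 4 = 3} ∈ p :=
    Filter.mem_of_superset (pos_mem hp) hsub
  rcases (Ultrafilter.union_mem_iff).1 hu with h | h
  · exact ⟨1, by norm_num, h⟩
  · exact ⟨3, by norm_num, h⟩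

lemma exists_T {p : Ultrafilter ℕ} (hp : StronglySummable p) :
    ∃ τ, {m : ℕ | 2 ≤ m ∧ tp m = τ} ∈ p := by
  have hsub : {m : ℕ | 2 ≤ m} ⊆
      {m : ℕ | 2 ≤ m ∧ tp m = 2} ∪ {m : ℕ | 2 ≤ m ∧ tp m = 3} := by
    intro m hm
    rcases tp_two_or_three hm with h | h
    · exact Or.inl ⟨hm, h⟩
    · exact Or.inr ⟨hm, h⟩
  have hu := Filter.mem_of_superset (two_le_mem hp) hsub
  rcases (Ultrafilter.union_mem_iff).1 hu with h | h
  · exact ⟨2, h⟩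
  · exact ⟨3, h⟩

lemma finite_of_no_three (S : Set ℕ)
    (h : ∀ a ∈ S, ∀ b ∈ S, ∀ c ∈ S, a = b ∨ a = c ∨ b = c) : S.Finite := by
  by_contra hinf
  have hinf : S.Infinite := hinf
  obtain ⟨a, ha⟩ := hinf.nonempty
  obtain ⟨b, hb⟩ := (hinf.diff (Set.finite_singleton a)).nonempty
  have hab : ({a, b} : Set ℕ).Finite := (Set.finite_singleton b).insert a
  obtain ⟨c, hc⟩ := (hinf.diff hab).nonempty
  simp only [Set.mem_diff, Set.mem_singleton_iff, Set.mem_insert_iff] at hb hc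
  rcases h a ha b hb.1 c hc.1 with h' | h' | h' <;> tauto

/-! ### structure of generators of an FS-set all of whose members have
the same odd part mod 4 -/

lemma gap_lemma {x : ℕ → ℕ} (hx : ∀ i, 0 < x i) {ω : ℕ}
    (hFO : ∀ m ∈ FS x, oP m % 4 = ω) {i j : ℕ} (hij : i ≠ j)
    (hlt : v2 (x i) < v2 (x j)) : v2 (x i) + 2 ≤ v2 (x j) := by
  by_contra hcon
  have hd0 : v2 (x j) = v2 (x i) + 1 := by omega
  have hxi0 : x i ≠ 0 := by have := hx i; omega
  have hxj0 : x j ≠ 0 := by have := hx j; omega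
  have hαo : oP (x i) % 2 = 1 := oP_odd hxi0
  have hβo : oP (x j) % 2 = 1 := oP_odd hxj0
  have hxi : x i = 2 ^ v2 (x i) * oP (x i) := (pow_v2_mul_oP (x i)).symm
  have hxj : x j = 2 ^ (v2 (x i) + 1) * oP (x j) := by
    rw [← hd0]; exact (pow_v2_mul_oP (x j)).symm
  have hsum : x i + x j = 2 ^ v2 (x i) * (oP (x i) + 2 * oP (x j)) := by
    calc x i + x j = 2 ^ v2 (x i) * oP (x i) + 2 ^ (v2 (x i) + 1) * oP (x j) := by
          rw [← hxi, ← hxj]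
      _ = 2 ^ v2 (x i) * (oP (x i) + 2 * oP (x j)) := by ring
  have hoddsum : (oP (x i) + 2 * oP (x j)) % 2 = 1 := by omega
  have h1 := hFO _ (pair_mem_FS x hij)
  rw [hsum, oP_pow_mul hoddsum] at h1
  have h2 := hFO _ (single_mem_FS x i)
  omega

lemma no3_lemma {x : ℕ → ℕ} (hx : ∀ i, 0 < x i) {ω : ℕ} (hω : ω % 2 = 1)
    (hFO : ∀ m ∈ FS x, oP m % 4 = ω) {i j k : ℕ} (hij : i ≠ j) (hik : i ≠ k)
    (hjk : j ≠ k) (h1 : v2 (x j) = v2 (x i)) (h2 : v2 (x k) = v2 (x i)) : False := by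
  have hxi0 : x i ≠ 0 := by have := hx i; omega
  have hxj0 : x j ≠ 0 := by have := hx j; omega
  have hxk0 : x k ≠ 0 := by have := hx k; omega
  have hαo : oP (x i) % 2 = 1 := oP_odd hxi0
  have hβo : oP (x j) % 2 = 1 := oP_odd hxj0
  have hγo : oP (x k) % 2 = 1 := oP_odd hxk0
  have hxi : x i = 2 ^ v2 (x i) * oP (x i) := (pow_v2_mul_oP (x i)).symm
  have hxj : x j = 2 ^ v2 (x i) * oP (x j) := by
    rw [← h1]; exact (pow_v2_mul_oP (x j)).symm
  have hxk : x k = 2 ^ v2 (x i) * oP (x k) := by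
    rw [← h2]; exact (pow_v2_mul_oP (x k)).symm
  have hsum : x i + x j + x k = 2 ^ v2 (x i) * (oP (x i) + oP (x j) + oP (x k)) := by
    calc x i + x j + x k
        = 2 ^ v2 (x i) * oP (x i) + 2 ^ v2 (x i) * oP (x j) + 2 ^ v2 (x i) * oP (x k) := by
          rw [← hxi, ← hxj, ← hxk]
      _ = 2 ^ v2 (x i) * (oP (x i) + oP (x j) + oP (x k)) := by ring
  have hodd : (oP (x i) + oP (x j) + oP (x k)) % 2 = 1 := by omega
  have h3 := hFO _ (triple_mem_FS x hij hik hjk)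
  rw [hsum, oP_pow_mul hodd] at h3
  have h4 := hFO _ (single_mem_FS x i)
  have h5 := hFO _ (single_mem_FS x j)
  have h6 := hFO _ (single_mem_FS x k)
  omega

/-! ### Claim 1: the diagonal set `D` is in `p` -/

lemma claim1 {p : Ultrafilter ℕ} (hp : StronglySummable p) (A' : ℕ → Set ℕ)
    (hA' : ∀ n, A' n ∈ p.map bmax) (hanti : ∀ n k : ℕ, n ≤ k → A' k ⊆ A' n) :
    {m : ℕ | 0 < m ∧ bmax m ∈ A' (v2 m)} ∈ p := by
  by_contra hD
  have hDc : {m : ℕ | 0 < m ∧ bmax m ∈ A' (v2 m)}ᶜ ∈ p :=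
    Ultrafilter.compl_mem_iff_notMem.2 hD
  obtain ⟨ω, hω, hO⟩ := exists_O hp
  obtain ⟨τ, hT⟩ := exists_T hp
  have hE : ({m : ℕ | 0 < m ∧ bmax m ∈ A' (v2 m)}ᶜ ∩
      ({m | oP m % 4 = ω} ∩ {m | 2 ≤ m ∧ tp m = τ})) ∈ p :=
    Filter.inter_mem hDc (Filter.inter_mem hO hT)
  obtain ⟨x, hxpos, hsub, hFSp⟩ := hp _ hE
  have hx0 : ∀ i, x i ≠ 0 := fun i => by have := hxpos i; omega
  have hFD : ∀ m ∈ FS x, bmax m ∉ A' (v2 m) := by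
    intro m hm hc
    exact (hsub hm).1 ⟨FS_pos hxpos hm, hc⟩
  have hFO : ∀ m ∈ FS x, oP m % 4 = ω := fun m hm => (hsub hm).2.1
  have hFT : ∀ m ∈ FS x, 2 ≤ m ∧ tp m = τ := fun m hm => (hsub hm).2.2
  -- the minimal 2-adic valuation among the generators
  set N := sInf (Set.range fun i => v2 (x i)) with hNdef
  obtain ⟨i₀, hi₀⟩ : ∃ i₀, v2 (x i₀) = N :=
    Nat.sInf_mem (Set.range_nonempty (fun i => v2 (x i)))
  have hNle : ∀ j, N ≤ v2 (x j) := fun j => Nat.sInf_le ⟨j, rfl⟩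
  have hdich : ∀ j, v2 (x j) = N ∨ N + 2 ≤ v2 (x j) := by
    intro j
    by_cases hjN : v2 (x j) = N
    · exact Or.inl hjN
    · right
      have hlt : N < v2 (x j) := lt_of_le_of_ne (hNle j) (Ne.symm hjN)
      have hji : i₀ ≠ j := by
        intro h; rw [← h, hi₀] at hjN; exact hjN rfl
      have := gap_lemma hxpos hFO hji (by rw [hi₀]; exact hlt)
      omega
  have hno2 : ∀ j k, j ≠ k → j ≠ i₀ → k ≠ i₀ → v2 (x j) = N → v2 (x k) = N → False := by
    intro j k hjk hji hki hjN hkN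
    exact no3_lemma hxpos hω hFO (Ne.symm hji) (Ne.symm hki) hjk
      (by rw [hjN, hi₀]) (by rw [hkN, hi₀])
  -- the key bound
  have key : ∀ m ∈ FS x, bmax m ∈ A' (N + 1) → bmax m ≤ bmax (x i₀) + 1 := by
    intro m hm hbA
    have hmpos : 0 < m := FS_pos hxpos hm
    have hm0 : m ≠ 0 := by omega
    obtain ⟨s, hsne, hsum⟩ := hm
    have hmFS : m ∈ FS x := ⟨s, hsne, hsum⟩
    have hvN : N ≤ v2 m := by
      rw [← hsum]
      exact v2_sum_ge hxpos hsne (fun j _ => hNle j)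
    rcases Nat.lt_or_ge (v2 m) (N + 2) with hv | hv
    · -- v2 m = N or N + 1 : direct contradiction
      exfalso
      have hvm : v2 m = N ∨ v2 m = N + 1 := by omega
      rcases hvm with h | h
      · exact hFD m hmFS (h ▸ hanti N (N + 1) (by omega) hbA)
      · exact hFD m hmFS (h ▸ hbA)
    · -- v2 m ≥ N + 2
      have hi₀s : i₀ ∉ s := by
        intro hi₀s
        set r := ∑ j ∈ s.erase i₀, x j with hrdef
        have hmeq : m = x i₀ + r := by
          rw [← hsum, Finset.add_sum_erase s x hi₀s]
        rcases Finset.eq_empty_or_nonempty (s.erase i₀) with he | hne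
        · -- m = x i₀, so v2 m = N
          have : r = 0 := by rw [hrdef, he, Finset.sum_empty]
          rw [hmeq, this, add_zero, hi₀] at hv
          omega
        · have hrFS : r ∈ FS x := ⟨s.erase i₀, hne, rfl⟩
          have hr0 : r ≠ 0 := by have := FS_pos hxpos hrFS; omega
          by_cases htie : ∃ j ∈ s.erase i₀, v2 (x j) = N
          · -- tie: v2 r = N, and then v2 m = N + 1
            obtain ⟨j, hj, hjN⟩ := htie
            have hji : j ≠ i₀ := Finset.ne_of_mem_erase hj
            have hrN : v2 r = N := by
              set r' := ∑ k ∈ (s.erase i₀).erase j, x k with hr'def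
              have hreq : r = x j + r' := by
                rw [hrdef, ← Finset.add_sum_erase _ x hj]
              rcases Finset.eq_empty_or_nonempty ((s.erase i₀).erase j) with he' | hne'
              · rw [hreq, hr'def, he', Finset.sum_empty, add_zero, hjN]
              · have hr'FS : r' ∈ FS x := ⟨(s.erase i₀).erase j, hne', rfl⟩
                have hr'0 : r' ≠ 0 := by have := FS_pos hxpos hr'FS; omega
                have hr'v : N + 2 ≤ v2 r' := by
                  rw [hr'def]
                  apply v2_sum_ge hxpos hne'
                  intro k hk
                  have hkj : k ≠ j := Finset.ne_of_mem_erase hk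
                  have hki : k ≠ i₀ := Finset.ne_of_mem_erase (Finset.mem_of_mem_erase hk)
                  rcases hdich k with hkN | hk2
                  · exact (hno2 j k (Ne.symm hkj) hji hki hjN hkN).elim
                  · exact hk2
                rw [hreq, v2_add_left (hx0 j) hr'0 (by omega)]
                exact hjN
            -- tie rule: v2 (x i₀ + r) = N + 1
            have hxi₀rep : x i₀ = 2 ^ N * oP (x i₀) := by
              rw [← hi₀]; exact (pow_v2_mul_oP (x i₀)).symm
            have hrrep : r = 2 ^ N * oP r := by
              rw [← hrN]; exact (pow_v2_mul_oP r).symm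
            have hvm1 : v2 m = N + 1 := by
              rw [hmeq]
              nth_rewrite 1 [hxi₀rep]
              nth_rewrite 1 [hrrep]
              apply v2_tie (oP_odd (hx0 i₀))
              rw [hFO _ (single_mem_FS x i₀), hFO _ hrFS]
            omega
          · -- no tie: v2 r ≥ N + 2, so v2 m = N
            push_neg at htie
            have hrv : N + 2 ≤ v2 r := by
              rw [hrdef]
              apply v2_sum_ge hxpos hne
              intro k hk
              rcases hdich k with hkN | hk2
              · exact absurd hkN (htie k hk)
              · exact hk2
            have : v2 m = N := by
              rw [hmeq, v2_add_left (hx0 i₀) hr0 (by rw [hi₀]; omega), hi₀]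
            omega
      -- now i₀ ∉ s; consider m' = x i₀ + m
      have hm' : x i₀ + m ∈ FS x := by
        refine ⟨insert i₀ s, ⟨i₀, Finset.mem_insert_self _ _⟩, ?_⟩
        rw [Finset.sum_insert hi₀s, hsum]
      have hvm' : v2 (x i₀ + m) = N := by
        rw [v2_add_left (hx0 i₀) hm0 (by rw [hi₀]; omega), hi₀]
      have hnotin : bmax (x i₀ + m) ∉ A' N := by
        have := hFD _ hm'
        rwa [hvm'] at this
      by_contra hbig
      push_neg at hbig
      have hcl : bmax (x i₀ + m) = bmax m := by
        apply carry (hFT m hmFS).1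
        · have h1 : x i₀ < 2 ^ (bmax (x i₀) + 1) := lt_pow_bmax (hx0 i₀)
          have h2 : (2:ℕ) ^ (bmax (x i₀) + 1) ≤ 2 ^ (bmax m - 1) :=
            Nat.pow_le_pow_right (by norm_num) (by omega)
          omega
        · rw [(hFT _ hm').2, (hFT m hmFS).2]
      exact hnotin (by rw [hcl]; exact hanti N (N + 1) (by omega) hbA)
  -- conclude : a finite set would be in the ultrafilter
  have hBmem : bmax '' FS x ∩ A' (N + 1) ∈ p.map bmax := by
    apply Filter.inter_mem _ (hA' (N + 1))
    show bmax '' FS x ∈ Ultrafilter.map bmax p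
    rw [Ultrafilter.mem_map]
    exact Filter.mem_of_superset hFSp (Set.subset_preimage_image bmax (FS x))
  have hsubI : bmax '' FS x ∩ A' (N + 1) ⊆ Set.Iic (bmax (x i₀) + 1) := by
    rintro b ⟨⟨m, hm, rfl⟩, hbA⟩
    exact key m hm hbA
  exact u_nofin hp ((Set.finite_Iic _).subset hsubI) hBmem

/-! ### Claim 2: from `D ∈ p` to the pseudo-intersection -/

lemma claim2 {p : Ultrafilter ℕ} (hp : StronglySummable p) (A' : ℕ → Set ℕ)
    (hA' : ∀ n, A' n ∈ p.map bmax) (hanti : ∀ n k : ℕ, n ≤ k → A' k ⊆ A' n) :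
    ∃ B ∈ p.map bmax, ∀ n, (B \ A' n).Finite := by
  have hD : {m : ℕ | 0 < m ∧ bmax m ∈ A' (v2 m)} ∈ p := claim1 hp A' hA' hanti
  obtain ⟨ω, hω, hO⟩ := exists_O hp
  obtain ⟨τ, hT⟩ := exists_T hp
  have hE : ({m : ℕ | 0 < m ∧ bmax m ∈ A' (v2 m)} ∩
      ({m | oP m % 4 = ω} ∩ {m | 2 ≤ m ∧ tp m = τ})) ∈ p :=
    Filter.inter_mem hD (Filter.inter_mem hO hT)
  obtain ⟨x, hxpos, hsub, hFSp⟩ := hp _ hE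
  have hx0 : ∀ i, x i ≠ 0 := fun i => by have := hxpos i; omega
  have hFD : ∀ m ∈ FS x, bmax m ∈ A' (v2 m) := fun m hm => (hsub hm).1.2
  have hFO : ∀ m ∈ FS x, oP m % 4 = ω := fun m hm => (hsub hm).2.1
  have hFT : ∀ m ∈ FS x, 2 ≤ m ∧ tp m = τ := fun m hm => (hsub hm).2.2
  refine ⟨bmax '' FS x, ?_, ?_⟩
  · show bmax '' FS x ∈ Ultrafilter.map bmax p
    rw [Ultrafilter.mem_map]
    exact Filter.mem_of_superset hFSp (Set.subset_preimage_image bmax (FS x))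
  intro n
  -- the finitely many "low" generators
  have hfib : ∀ v, {j : ℕ | v2 (x j) = v}.Finite := by
    intro v
    apply finite_of_no_three
    intro a ha b hb c hc
    by_contra hcon
    push_neg at hcon
    exact no3_lemma hxpos hω hFO hcon.1 hcon.2.1 hcon.2.2
      (by rw [Set.mem_setOf_eq] at ha hb; rw [hb, ha])
      (by rw [Set.mem_setOf_eq] at ha hc; rw [hc, ha])
  have hLfin : {j : ℕ | v2 (x j) < n}.Finite := by
    have : {j : ℕ | v2 (x j) < n} ⊆ ⋃ v ∈ Set.Iio n, {j : ℕ | v2 (x j) = v} := by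
      intro j hj
      simp only [Set.mem_iUnion, Set.mem_setOf_eq, Set.mem_Iio]
      exact ⟨v2 (x j), hj, rfl⟩
    exact (Set.Finite.biUnion (Set.finite_Iio n) (fun v _ => hfib v)).subset this
  set Ls : Finset ℕ := hLfin.toFinset with hLs
  set Λ : ℕ := ∑ j ∈ Ls, x j with hΛ
  have hmemLs : ∀ j, j ∈ Ls ↔ v2 (x j) < n := by
    intro j; rw [hLs, Set.Finite.mem_toFinset]; rfl
  -- main bound
  have key : ∀ b ∈ bmax '' FS x, b ∉ A' n → b ≤ bmax Λ + 2 := by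
    rintro b ⟨m, hm, rfl⟩ hbn
    have hmpos : 0 < m := FS_pos hxpos hm
    obtain ⟨s, hsne, hsum⟩ := hm
    have hmFS : m ∈ FS x := ⟨s, hsne, hsum⟩
    rcases Finset.eq_empty_or_nonempty (s ∩ Ls) with hL | hLne
    · -- all generators high: m has high valuation, so bmax m ∈ A' n
      exfalso
      have hvm : n ≤ v2 m := by
        rw [← hsum]
        apply v2_sum_ge hxpos hsne
        intro j hj
        by_contra hc
        push_neg at hc
        have : j ∈ s ∩ Ls := Finset.mem_inter.2 ⟨hj, (hmemLs j).2 hc⟩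
        rw [hL] at this
        exact absurd this (Finset.notMem_empty j)
      exact hbn (hanti n (v2 m) hvm (hFD m hmFS))
    rcases Finset.eq_empty_or_nonempty (s \ Ls) with hH | hHne
    · -- all generators low: m ≤ Λ
      have hsL : s ⊆ Ls := by
        intro j hj
        by_contra hc
        have : j ∈ s \ Ls := Finset.mem_sdiff.2 ⟨hj, hc⟩
        rw [hH] at this
        exact absurd this (Finset.notMem_empty j)
      have hmΛ : m ≤ Λ := by
        rw [← hsum, hΛ]
        exact Finset.sum_le_sum_of_subset hsL
      have := bmax_mono (show m ≠ 0 by omega) hmΛ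
      omega
    · -- mixed: split m = l + h
      set l : ℕ := ∑ j ∈ s ∩ Ls, x j with hl
      set h : ℕ := ∑ j ∈ s \ Ls, x j with hh
      have hml : m = l + h := by
        rw [← hsum, hl, hh, Finset.sum_inter_add_sum_sdiff]
      have hhFS : h ∈ FS x := ⟨s \ Ls, hHne, rfl⟩
      have hhpos : 0 < h := FS_pos hxpos hhFS
      have hlpos : 0 < l := Finset.sum_pos (fun i _ => hxpos i) hLne
      have hvh : n ≤ v2 h := by
        rw [hh]
        apply v2_sum_ge hxpos hHne
        intro j hj
        have := (Finset.mem_sdiff.1 hj).2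
        rw [hmemLs j] at this
        omega
      have hhA : bmax h ∈ A' n := hanti n (v2 h) hvh (hFD h hhFS)
      have hlΛ : l ≤ Λ := Finset.sum_le_sum_of_subset (Finset.inter_subset_right)
      have hΛ0 : Λ ≠ 0 := by omega
      rcases Nat.lt_or_ge (bmax Λ + 1) (bmax h) with hcase | hcase
      · -- h dominates: carry lemma gives bmax m = bmax h ∈ A' n, contradiction
        exfalso
        have hcl : bmax (l + h) = bmax h := by
          apply carry (hFT h hhFS).1
          · have h1 : l < 2 ^ (bmax Λ + 1) := lt_of_le_of_lt hlΛ (lt_pow_bmax hΛ0)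
            have h2 : (2:ℕ) ^ (bmax Λ + 1) ≤ 2 ^ (bmax h - 1) :=
              Nat.pow_le_pow_right (by norm_num) (by omega)
            omega
          · have hm' : l + h ∈ FS x := by rw [← hml]; exact hmFS
            rw [(hFT _ hm').2, (hFT h hhFS).2]
        rw [hml, hcl] at hbn
        exact hbn hhA
      · -- h small too: m is bounded
        have h1 : l < 2 ^ (bmax Λ + 1) := lt_of_le_of_lt hlΛ (lt_pow_bmax hΛ0)
        have h2 : h < 2 ^ (bmax Λ + 2) := by
          have := lt_pow_bmax (show h ≠ 0 by omega)
          have hle : (2:ℕ) ^ (bmax h + 1) ≤ 2 ^ (bmax Λ + 2) :=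
            Nat.pow_le_pow_right (by norm_num) (by omega)
          omega
        have hmb : m < 2 ^ (bmax Λ + 2 + 1) := by
          have e1 : (2:ℕ) ^ (bmax Λ + 1) = 2 * 2 ^ bmax Λ := by ring
          have e2 : (2:ℕ) ^ (bmax Λ + 2) = 4 * 2 ^ bmax Λ := by ring
          have e3 : (2:ℕ) ^ (bmax Λ + 2 + 1) = 8 * 2 ^ bmax Λ := by ring
          omega
        exact bmax_le_of_lt (by omega) hmb
  have hfin : bmax '' FS x \ A' n ⊆ Set.Iic (bmax Λ + 2) := by
    rintro b ⟨hb, hbn⟩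
    exact key b hb hbn
  exact (Set.finite_Iic _).subset hfin

end PPointAux

/-- The image of a strongly summable ultrafilter under `bmax` is a P-point. -/
theorem bmax_image_is_Ppoint (p : Ultrafilter ℕ) (hp : StronglySummable p) :
    (∀ n : ℕ, p.map bmax ≠ pure n) ∧
    (∀ A : ℕ → Set ℕ, (∀ n, A n ∈ p.map bmax) →
      ∃ B ∈ p.map bmax, ∀ n, (B \ A n).Finite) := by
  constructor
  · intro n hn
    have h1 : ({n} : Set ℕ) ∈ p.map bmax := by
      rw [hn]
      show ({n} : Set ℕ) ∈ (pure n : Ultrafilter ℕ)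
      simp
    exact PPointAux.u_nofin hp (Set.finite_singleton n) h1
  · intro A hA
    set A' : ℕ → Set ℕ := fun n => (⋂ k ∈ Set.Iic n, A k) ∩ {m : ℕ | n < m} with hA'def
    have hA' : ∀ n, A' n ∈ p.map bmax := by
      intro n
      apply Filter.inter_mem
      · exact (Filter.biInter_mem (Set.finite_Iic n)).2 fun k _ => hA k
      · have : {m : ℕ | n < m} = ({m : ℕ | m ≤ n})ᶜ := by
          ext m; simp
        rw [this]
        apply Ultrafilter.compl_mem_iff_notMem.2
        exact PPointAux.u_nofin hp ((Set.finite_Iic n).subset (fun m hm => hm))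
    have hanti : ∀ n k : ℕ, n ≤ k → A' k ⊆ A' n := by
      intro n k hnk m hm
      obtain ⟨h1, h2⟩ := hm
      constructor
      · apply Set.mem_biInter
        intro j hj
        exact Set.mem_iInter₂.1 h1 j (le_trans hj hnk)
      · exact lt_of_le_of_lt hnk h2
    obtain ⟨B, hB, hBfin⟩ := PPointAux.claim2 hp A' hA' hanti
    refine ⟨B, hB, fun n => ?_⟩
    apply (hBfin n).subset
    apply Set.diff_subset_diff_right
    intro m hm
    exact Set.mem_iInter₂.1 hm.1 n (le_refl n)
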